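/- arXiv:2302.00237 — 3 statements merged into one kernel-verified Lean document; each statement's English description precedes it below -/
import Mathlib

section
/- Let γ ∈ (0,1), let U ⊆ ℝᵐ, let f : ℝⁿ × ℝᵐ → ℝⁿ, let R : ℝⁿ × ℝᵐ → ℝ, and let V : ℝⁿ → ℝ be a bounded, continuously differentiable function satisfying the Hamilton–Jacobi–Bellman inequality V(x) · ln γ + R(x,u) + ⟪∇V(x), f(x,u)⟫ ≤ 0 for all x ∈ ℝⁿ and all u ∈ U. Let u : [0,∞) → ℝᵐ with u(t) ∈ U for all t ≥ 0, and let x : [0,∞) → ℝⁿ be differentiable with x'(t) = f(x(t), u(t)) for all t ≥ 0 and x(0) = x₀. Assume the function t ↦ γ^t · R(x(t), u(t)) is integrable on [0,∞). Then ∫₀^∞ γ^τ · R(x(τ), u(τ)) dτ ≤ V(x₀). -/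
open MeasureTheory RealInnerProductSpace

/-- If a bounded `C¹` function `V` satisfies the HJB inequality
`V(x)·ln γ + R(x,u) + ⟪∇V(x), f(x,u)⟫ ≤ 0` for all states `x` and controls `u ∈ U`,
then the discounted total reward of any admissible trajectory from `x₀` is at most `V(x₀)`. -/
theorem discounted_reward_le_of_hjb_inequality {n m : ℕ} (γ : ℝ)
    (hγ : γ ∈ Set.Ioo (0 : ℝ) 1)
    (U : Set (EuclideanSpace ℝ (Fin m)))
    (f : EuclideanSpace ℝ (Fin n) → EuclideanSpace ℝ (Fin m) → EuclideanSpace ℝ (Fin n))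
    (R : EuclideanSpace ℝ (Fin n) → EuclideanSpace ℝ (Fin m) → ℝ)
    (V : EuclideanSpace ℝ (Fin n) → ℝ)
    (hVbound : ∃ C : ℝ, ∀ y, |V y| ≤ C)
    (hV : ContDiff ℝ 1 V)
    (hHJB : ∀ y : EuclideanSpace ℝ (Fin n), ∀ w ∈ U,
      V y * Real.log γ + R y w + ⟪gradient V y, f y w⟫ ≤ 0)
    (x₀ : EuclideanSpace ℝ (Fin n))
    (u : ℝ → EuclideanSpace ℝ (Fin m)) (x : ℝ → EuclideanSpace ℝ (Fin n))
    (hu : ∀ t ≥ (0 : ℝ), u t ∈ U)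
    (hx : ∀ t ≥ (0 : ℝ), HasDerivAt x (f (x t) (u t)) t)
    (hx0 : x 0 = x₀)
    (hint : IntegrableOn (fun t : ℝ => γ ^ t * R (x t) (u t)) (Set.Ici 0)) :
    (∫ τ in Set.Ici (0 : ℝ), γ ^ τ * R (x τ) (u τ)) ≤ V x₀ := by
  obtain ⟨C, hC⟩ := hVbound
  have hγ0 : (0:ℝ) < γ := hγ.1
  set φ : ℝ → ℝ := fun t => γ ^ t * R (x t) (u t) with hφ
  -- the "value along trajectory" function and its derivative
  set g : ℝ → ℝ := fun t => -(γ ^ t * V (x t)) with hg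
  set g' : ℝ → ℝ := fun t =>
    -(γ ^ t * Real.log γ * V (x t) + γ ^ t * ⟪gradient V (x t), f (x t) (u t)⟫) with hg'
  have hderiv : ∀ t ≥ (0:ℝ), HasDerivAt g (g' t) t := by
    intro t ht
    have hVd : DifferentiableAt ℝ V (x t) := (hV.differentiable one_ne_zero) (x t)
    have hgrad : HasFDerivAt V ((InnerProductSpace.toDual ℝ _) (gradient V (x t))) (x t) :=
      hVd.hasGradientAt.hasFDerivAt
    have hcomp : HasDerivAt (fun s => V (x s))
        (((InnerProductSpace.toDual ℝ _) (gradient V (x t))) (f (x t) (u t))) t :=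
      hgrad.comp_hasDerivAt t (hx t ht)
    have hrpow : HasDerivAt (fun s : ℝ => γ ^ s) (γ ^ t * Real.log γ) t :=
      (Real.hasStrictDerivAt_const_rpow hγ0 t).hasDerivAt
    have h := (hrpow.mul hcomp).neg
    have heq : g' t = -(γ ^ t * Real.log γ * V (x t) +
        γ ^ t * ((InnerProductSpace.toDual ℝ _) (gradient V (x t))) (f (x t) (u t))) := by
      simp only [hg', InnerProductSpace.toDual_apply_apply]
    rw [heq]
    exact h
  have hxc : ∀ t ≥ (0:ℝ), ContinuousAt x t := fun t ht => (hx t ht).continuousAt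
  have key : ∀ T ≥ (0:ℝ), (∫ τ in (0:ℝ)..T, φ τ) ≤ V x₀ + C * γ ^ T := by
    intro T hT
    have hgc : ContinuousOn g (Set.Icc 0 T) := fun t ht =>
      ((hderiv t ht.1).continuousAt).continuousWithinAt
    have hd : ∀ t ∈ Set.Ioo (0:ℝ) T, HasDerivWithinAt g (g' t) (Set.Ioi t) t :=
      fun t ht => (hderiv t ht.1.le).hasDerivWithinAt
    have hφint : IntegrableOn φ (Set.Icc 0 T) :=
      hint.mono_set Set.Icc_subset_Ici_self
    have hle : ∀ t ∈ Set.Ioo (0:ℝ) T, φ t ≤ g' t := by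
      intro t ht
      have h1 := hHJB (x t) (u t) (hu t ht.1.le)
      have h2 : (0:ℝ) < γ ^ t := Real.rpow_pos_of_pos hγ0 t
      have : γ ^ t * (V (x t) * Real.log γ + R (x t) (u t)
          + ⟪gradient V (x t), f (x t) (u t)⟫) ≤ 0 :=
        mul_nonpos_of_nonneg_of_nonpos h2.le h1
      simp only [hφ, hg']
      nlinarith [this]
    have := intervalIntegral.integral_le_sub_of_hasDeriv_right_of_le hT hgc hd hφint hle
    have hg0 : g 0 = -(V x₀) := by simp [hg, hx0, Real.rpow_zero]
    have hbd : g T - g 0 ≤ V x₀ + C * γ ^ T := by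
      have h2 : (0:ℝ) < γ ^ T := Real.rpow_pos_of_pos hγ0 T
      have habs := hC (x T)
      have : -(V (x T)) ≤ C := by
        have := abs_le.mp habs
        linarith [this.1]
      have hm := mul_le_mul_of_nonneg_left this h2.le
      simp only [hg, hx0, Real.rpow_zero, one_mul]
      nlinarith [hm]
    linarith [this, hbd]
  -- pass to the limit T → ∞
  have hIci : (∫ τ in Set.Ici (0:ℝ), φ τ) = ∫ τ in Set.Ioi (0:ℝ), φ τ :=
    integral_Ici_eq_integral_Ioi
  have hIoi : IntegrableOn φ (Set.Ioi 0) := hint.mono_set Set.Ioi_subset_Ici_self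
  have htend : Filter.Tendsto (fun T : ℝ => ∫ τ in (0:ℝ)..T, φ τ) Filter.atTop
      (nhds (∫ τ in Set.Ioi (0:ℝ), φ τ)) :=
    intervalIntegral_tendsto_integral_Ioi 0 hIoi Filter.tendsto_id
  have hrhs : Filter.Tendsto (fun T : ℝ => V x₀ + C * γ ^ T) Filter.atTop
      (nhds (V x₀ + C * 0)) := by
    refine Filter.Tendsto.const_add _ (Filter.Tendsto.const_mul _ ?_)
    exact tendsto_rpow_atTop_of_base_lt_one γ (by linarith [hγ0]) hγ.2
  have hlim : (∫ τ in Set.Ioi (0:ℝ), φ τ) ≤ V x₀ + C * 0 := by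
    refine le_of_tendsto_of_tendsto htend hrhs ?_
    filter_upwards [Filter.eventually_ge_atTop (0:ℝ)] with T hT
    exact key T hT
  rw [hIci]
  linarith [hlim]
end

section
/- Let γ ∈ (0,1), let U ⊆ ℝᵐ, let f : ℝⁿ × ℝᵐ → ℝⁿ, let R : ℝⁿ × ℝᵐ → ℝ, and let V : ℝⁿ → ℝ be a bounded, continuously differentiable function. Suppose u* : [0,∞) → ℝᵐ with u*(t) ∈ U for all t ≥ 0, and x* : [0,∞) → ℝⁿ is differentiable with x*'(t) = f(x*(t), u*(t)) for all t ≥ 0 and x*(0) = x₀, the function t ↦ γ^t · R(x*(t), u*(t)) is integrable on [0,∞), and the HJB equality V(x*(t)) · ln γ + R(x*(t), u*(t)) + ⟪∇V(x*(t)), f(x*(t), u*(t))⟫ = 0 holds along the trajectory for all t ≥ 0. Then ∫₀^∞ γ^τ · R(x*(τ), u*(τ)) dτ = V(x₀). -/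
open MeasureTheory RealInnerProductSpace

/-- If a bounded `C¹` function `V` satisfies the HJB equality
`V(x*(t))·ln γ + R(x*(t),u*(t)) + ⟪∇V(x*(t)), f(x*(t),u*(t))⟫ = 0` along an admissible
trajectory `x*` with control `u*` from `x₀`, then the discounted total reward of that
trajectory equals `V(x₀)`. -/
theorem discounted_reward_eq_of_hjb_equality {n m : ℕ} (γ : ℝ)
    (hγ : γ ∈ Set.Ioo (0 : ℝ) 1)
    (U : Set (EuclideanSpace ℝ (Fin m)))
    (f : EuclideanSpace ℝ (Fin n) → EuclideanSpace ℝ (Fin m) → EuclideanSpace ℝ (Fin n))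
    (R : EuclideanSpace ℝ (Fin n) → EuclideanSpace ℝ (Fin m) → ℝ)
    (V : EuclideanSpace ℝ (Fin n) → ℝ)
    (hVbound : ∃ C : ℝ, ∀ y, |V y| ≤ C)
    (hV : ContDiff ℝ 1 V)
    (x₀ : EuclideanSpace ℝ (Fin n))
    (ustar : ℝ → EuclideanSpace ℝ (Fin m)) (xstar : ℝ → EuclideanSpace ℝ (Fin n))
    (hu : ∀ t ≥ (0 : ℝ), ustar t ∈ U)
    (hx : ∀ t ≥ (0 : ℝ), HasDerivAt xstar (f (xstar t) (ustar t)) t)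
    (hx0 : xstar 0 = x₀)
    (hint : IntegrableOn (fun t : ℝ => γ ^ t * R (xstar t) (ustar t)) (Set.Ici 0))
    (hHJBeq : ∀ t ≥ (0 : ℝ),
      V (xstar t) * Real.log γ + R (xstar t) (ustar t) +
        ⟪gradient V (xstar t), f (xstar t) (ustar t)⟫ = 0) :
    (∫ τ in Set.Ici (0 : ℝ), γ ^ τ * R (xstar τ) (ustar τ)) = V x₀ := by
  obtain ⟨C, hC⟩ := hVbound
  set g : ℝ → ℝ := fun t => -(γ ^ t * V (xstar t)) with hg
  -- derivative of g
  have hderiv : ∀ t ∈ Set.Ici (0 : ℝ),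
      HasDerivAt g (γ ^ t * R (xstar t) (ustar t)) t := by
    intro t ht
    have h1 : HasDerivAt (fun s : ℝ => γ ^ s) (γ ^ t * Real.log γ) t :=
      (Real.hasStrictDerivAt_const_rpow hγ.1 t).hasDerivAt
    have hVd : DifferentiableAt ℝ V (xstar t) :=
      (hV.differentiable one_ne_zero).differentiableAt
    have h2 : HasDerivAt (fun s : ℝ => V (xstar s))
        ⟪gradient V (xstar t), f (xstar t) (ustar t)⟫ t := by
      have hG := hVd.hasGradientAt
      have := hG.hasFDerivAt.comp_hasDerivAt t (hx t ht)
      simp only [InnerProductSpace.toDual_apply_apply] at this; exact this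
    have h3 := ((h1.mul h2).neg)
    have hkey : -(γ ^ t * Real.log γ * V (xstar t) +
        γ ^ t * ⟪gradient V (xstar t), f (xstar t) (ustar t)⟫)
        = γ ^ t * R (xstar t) (ustar t) := by
      have h := hHJBeq t ht
      linear_combination (-(γ ^ t)) * h
    exact hkey ▸ h3
  -- g tends to 0 at infinity
  have htend : Filter.Tendsto g Filter.atTop (nhds 0) := by
    have h0 : Filter.Tendsto (fun t : ℝ => γ ^ t) Filter.atTop (nhds 0) :=
      tendsto_rpow_atTop_of_base_lt_one γ (by linarith [hγ.1]) hγ.2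
    have : Filter.Tendsto (fun t : ℝ => γ ^ t * V (xstar t)) Filter.atTop (nhds 0) := by
      refine squeeze_zero_norm (a := fun t : ℝ => γ ^ t * C) (fun t => ?_)
        (by simpa using h0.mul_const C)
      have hpos : (0 : ℝ) ≤ γ ^ t := (Real.rpow_pos_of_pos hγ.1 t).le
      rw [Real.norm_eq_abs, abs_mul, abs_of_nonneg hpos]
      exact mul_le_mul_of_nonneg_left (hC _) hpos
    simpa [hg] using this.neg
  have hcont : ContinuousWithinAt g (Set.Ici 0) 0 :=
    (hderiv 0 Set.self_mem_Ici).continuousAt.continuousWithinAt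
  have hintIoi : IntegrableOn (fun t : ℝ => γ ^ t * R (xstar t) (ustar t)) (Set.Ioi 0) :=
    hint.mono_set Set.Ioi_subset_Ici_self
  have := integral_Ioi_of_hasDerivAt_of_tendsto hcont
    (fun t ht => hderiv t (Set.mem_Ici.mpr (le_of_lt ht))) hintIoi htend
  rw [MeasureTheory.integral_Ici_eq_integral_Ioi, this]
  simp [hg, hx0, Real.rpow_zero]
end

section
/- Let γ ∈ (0,1), let U ⊆ ℝᵐ, let f : ℝⁿ × ℝᵐ → ℝⁿ, let R : ℝⁿ × ℝᵐ → ℝ, and let V : ℝⁿ → ℝ be a bounded, continuously differentiable function satisfying, for all x ∈ ℝⁿ and all u ∈ U, the HJB inequality V(x) · ln γ + R(x,u) + ⟪∇V(x), f(x,u)⟫ ≤ 0. Suppose further that from the initial state x₀ there exists a control u* : [0,∞) → ℝᵐ with values in U and a trajectory x* : [0,∞) → ℝⁿ (differentiable, with x*'(t) = f(x*(t), u*(t)) for all t ≥ 0, x*(0) = x₀, and t ↦ γ^t · R(x*(t), u*(t)) integrable on [0,∞)) along which the HJB equality V(x*(t)) · ln γ + R(x*(t), u*(t)) + ⟪∇V(x*(t)),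 f(x*(t), u*(t))⟫ = 0 holds for all t ≥ 0. Then the supremum, over all controls u : [0,∞) → U with values in U and all associated trajectories x from x₀ for which t ↦ γ^t · R(x(t), u(t)) is integrable, of the discounted total reward ∫₀^∞ γ^τ · R(x(τ), u(τ)) dτ equals V(x₀), and this supremum is attained by the pair (x*, u*). -/
open MeasureTheory RealInnerProductSpace

/-- Verification theorem: if a bounded `C¹` function `V` satisfies the HJB inequality
everywhere on `U`, and the HJB equality holds along some admissible trajectory
`(x*, u*)` from `x₀`, then `V(x₀)` is the supremum of the discounted total reward over
all admissible control–trajectory pairs from `x₀`, and this supremum is attained by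
`(x*, u*)`. -/
theorem value_isLUB_of_hjb {n m : ℕ} (γ : ℝ)
    (hγ : γ ∈ Set.Ioo (0 : ℝ) 1)
    (U : Set (EuclideanSpace ℝ (Fin m)))
    (f : EuclideanSpace ℝ (Fin n) → EuclideanSpace ℝ (Fin m) → EuclideanSpace ℝ (Fin n))
    (R : EuclideanSpace ℝ (Fin n) → EuclideanSpace ℝ (Fin m) → ℝ)
    (V : EuclideanSpace ℝ (Fin n) → ℝ)
    (hVbound : ∃ C : ℝ, ∀ y, |V y| ≤ C)
    (hV : ContDiff ℝ 1 V)
    (hHJB : ∀ y : EuclideanSpace ℝ (Fin n), ∀ w ∈ U,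
      V y * Real.log γ + R y w + ⟪gradient V y, f y w⟫ ≤ 0)
    (x₀ : EuclideanSpace ℝ (Fin n))
    (ustar : ℝ → EuclideanSpace ℝ (Fin m)) (xstar : ℝ → EuclideanSpace ℝ (Fin n))
    (hustar : ∀ t ≥ (0 : ℝ), ustar t ∈ U)
    (hxstar : ∀ t ≥ (0 : ℝ), HasDerivAt xstar (f (xstar t) (ustar t)) t)
    (hxstar0 : xstar 0 = x₀)
    (hintstar : IntegrableOn (fun t : ℝ => γ ^ t * R (xstar t) (ustar t)) (Set.Ici 0))
    (hHJBeq : ∀ t ≥ (0 : ℝ),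
      V (xstar t) * Real.log γ + R (xstar t) (ustar t) +
        ⟪gradient V (xstar t), f (xstar t) (ustar t)⟫ = 0) :
    IsLUB {r : ℝ | ∃ (x : ℝ → EuclideanSpace ℝ (Fin n)) (u : ℝ → EuclideanSpace ℝ (Fin m)),
        (∀ t ≥ (0 : ℝ), u t ∈ U) ∧
        (∀ t ≥ (0 : ℝ), HasDerivAt x (f (x t) (u t)) t) ∧
        x 0 = x₀ ∧
        IntegrableOn (fun t : ℝ => γ ^ t * R (x t) (u t)) (Set.Ici 0) ∧
        r = ∫ τ in Set.Ici (0 : ℝ), γ ^ τ * R (x τ) (u τ)} (V x₀) ∧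
      (∫ τ in Set.Ici (0 : ℝ), γ ^ τ * R (xstar τ) (ustar τ)) = V x₀ := by
  obtain ⟨hγ0, hγ1⟩ := hγ
  obtain ⟨C, hC⟩ := hVbound
  have hVdiff : Differentiable ℝ V := hV.differentiable one_ne_zero
  have hγpos : ∀ t : ℝ, 0 < γ ^ t := fun t => Real.rpow_pos_of_pos hγ0 t
  -- derivative of t ↦ γ^t * V (x t) along an admissible trajectory
  have hderiv : ∀ (x : ℝ → EuclideanSpace ℝ (Fin n)) (u : ℝ → EuclideanSpace ℝ (Fin m)),
      (∀ t ≥ (0 : ℝ), HasDerivAt x (f (x t) (u t)) t) → ∀ t ≥ (0 : ℝ),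
      HasDerivAt (fun s : ℝ => γ ^ s * V (x s))
        (γ ^ t * (V (x t) * Real.log γ + ⟪gradient V (x t), f (x t) (u t)⟫)) t := by
    intro x u hx t ht
    have h1 : HasDerivAt (fun s : ℝ => γ ^ s) (γ ^ t * Real.log γ) t :=
      (Real.hasStrictDerivAt_const_rpow hγ0 t).hasDerivAt
    have h2 : HasDerivAt (fun s : ℝ => V (x s)) ⟪gradient V (x t), f (x t) (u t)⟫ t := by
      have := ((hVdiff (x t)).hasGradientAt.hasFDerivAt).comp_hasDerivAt t (hx t ht)
      simpa [InnerProductSpace.toDual_apply_apply, Function.comp_def] using this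
    have := h1.mul h2
    refine this.congr_deriv ?_
    ring
  -- general upper bound on finite-horizon integrals
  have hkey : ∀ (x : ℝ → EuclideanSpace ℝ (Fin n)) (u : ℝ → EuclideanSpace ℝ (Fin m)),
      (∀ t ≥ (0 : ℝ), u t ∈ U) → (∀ t ≥ (0 : ℝ), HasDerivAt x (f (x t) (u t)) t) →
      IntegrableOn (fun t : ℝ => γ ^ t * R (x t) (u t)) (Set.Ici 0) → ∀ T ≥ (0 : ℝ),
      (∫ t in (0 : ℝ)..T, γ ^ t * R (x t) (u t)) ≤ V (x 0) - γ ^ T * V (x T) := by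
    intro x u hu hx hint T hT
    have hle := intervalIntegral.integral_le_sub_of_hasDeriv_right_of_le (g := fun s : ℝ => -(γ ^ s * V (x s)))
      (g' := fun s : ℝ => -(γ ^ s * (V (x s) * Real.log γ + ⟪gradient V (x s), f (x s) (u s)⟫)))
      (φ := fun s : ℝ => γ ^ s * R (x s) (u s)) hT
      (fun s hs => ((hderiv x u hx s hs.1).neg).continuousAt.continuousWithinAt)
      (fun s hs => ((hderiv x u hx s hs.1.le).neg).hasDerivWithinAt)
      (hint.mono_set (Set.Icc_subset_Ici_self))
      (by
        intro s hs
        have h := hHJB (x s) (u s) (hu s hs.1.le)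
        have hp := hγpos s
        nlinarith)
    have h0 : γ ^ (0 : ℝ) = 1 := Real.rpow_zero γ
    calc (∫ t in (0 : ℝ)..T, γ ^ t * R (x t) (u t))
        ≤ -(γ ^ T * V (x T)) - -(γ ^ (0 : ℝ) * V (x 0)) := hle
      _ = V (x 0) - γ ^ T * V (x T) := by rw [h0]; ring
  -- upper-bound part
  have hub : ∀ (x : ℝ → EuclideanSpace ℝ (Fin n)) (u : ℝ → EuclideanSpace ℝ (Fin m)),
      (∀ t ≥ (0 : ℝ), u t ∈ U) → (∀ t ≥ (0 : ℝ), HasDerivAt x (f (x t) (u t)) t) → x 0 = x₀ →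
      IntegrableOn (fun t : ℝ => γ ^ t * R (x t) (u t)) (Set.Ici 0) →
      (∫ τ in Set.Ici (0 : ℝ), γ ^ τ * R (x τ) (u τ)) ≤ V x₀ := by
    intro x u hu hx hx0 hint
    have htend : Filter.Tendsto (fun T : ℝ => ∫ t in (0 : ℝ)..T, γ ^ t * R (x t) (u t))
        Filter.atTop (nhds (∫ τ in Set.Ici (0 : ℝ), γ ^ τ * R (x τ) (u τ))) := by
      rw [integral_Ici_eq_integral_Ioi]
      exact intervalIntegral_tendsto_integral_Ioi 0 (hint.mono_set Set.Ioi_subset_Ici_self)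
        Filter.tendsto_id
    have hγtend : Filter.Tendsto (fun T : ℝ => γ ^ T) Filter.atTop (nhds 0) :=
      tendsto_rpow_atTop_of_base_lt_one γ (by linarith) hγ1
    have htend2 : Filter.Tendsto (fun T : ℝ => V x₀ + γ ^ T * C) Filter.atTop
        (nhds (V x₀)) := by
      have := Filter.Tendsto.add (tendsto_const_nhds (x := V x₀)) (hγtend.mul_const C)
      simpa using this
    refine le_of_tendsto_of_tendsto htend htend2 ?_
    filter_upwards [Filter.eventually_ge_atTop (0 : ℝ)] with T hT
    have h1 := hkey x u hu hx hint T hT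
    have h2 : -V (x T) ≤ C := by have := hC (x T); cases abs_le.mp this; linarith
    have hp := hγpos T
    have : V (x 0) - γ ^ T * V (x T) ≤ V (x 0) + γ ^ T * C := by nlinarith
    rw [← hx0]
    exact h1.trans this
  -- equality along the optimal trajectory
  have heq : (∫ τ in Set.Ici (0 : ℝ), γ ^ τ * R (xstar τ) (ustar τ)) = V x₀ := by
    have hfin : ∀ T ≥ (0 : ℝ), (∫ t in (0 : ℝ)..T, γ ^ t * R (xstar t) (ustar t))
        = V x₀ - γ ^ T * V (xstar T) := by
      intro T hT
      have hD : ∀ t ∈ Set.uIcc (0 : ℝ) T,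
          HasDerivAt (fun s : ℝ => -(γ ^ s * V (xstar s))) (γ ^ t * R (xstar t) (ustar t)) t := by
        intro t ht
        rw [Set.uIcc_of_le hT] at ht
        have := (hderiv xstar ustar hxstar t ht.1).neg
        refine this.congr_deriv ?_
        have h := hHJBeq t ht.1
        have : V (xstar t) * Real.log γ + ⟪gradient V (xstar t), f (xstar t) (ustar t)⟫
            = -R (xstar t) (ustar t) := by linarith
        rw [this]; ring
      have hInt : IntervalIntegrable (fun t : ℝ => γ ^ t * R (xstar t) (ustar t))
          volume 0 T := by
        rw [intervalIntegrable_iff_integrableOn_Icc_of_le hT]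
        exact hintstar.mono_set Set.Icc_subset_Ici_self
      have := intervalIntegral.integral_eq_sub_of_hasDerivAt hD hInt
      rw [this, hxstar0]
      have h0 : γ ^ (0 : ℝ) = 1 := Real.rpow_zero γ
      rw [h0]; ring
    have htend : Filter.Tendsto (fun T : ℝ => ∫ t in (0 : ℝ)..T, γ ^ t * R (xstar t) (ustar t))
        Filter.atTop (nhds (∫ τ in Set.Ici (0 : ℝ), γ ^ τ * R (xstar τ) (ustar τ))) := by
      rw [integral_Ici_eq_integral_Ioi]
      exact intervalIntegral_tendsto_integral_Ioi 0 (hintstar.mono_set Set.Ioi_subset_Ici_self)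
        Filter.tendsto_id
    have hγtend : Filter.Tendsto (fun T : ℝ => γ ^ T) Filter.atTop (nhds 0) :=
      tendsto_rpow_atTop_of_base_lt_one γ (by linarith) hγ1
    have hVtend : Filter.Tendsto (fun T : ℝ => γ ^ T * V (xstar T)) Filter.atTop (nhds 0) := by
      apply squeeze_zero_norm (a := fun T : ℝ => γ ^ T * C)
      · intro T
        have hp := (hγpos T).le
        have := hC (xstar T)
        rw [Real.norm_eq_abs, abs_mul, abs_of_nonneg hp]
        exact mul_le_mul_of_nonneg_left this hp
      · simpa using hγtend.mul_const C
    have htend2 : Filter.Tendsto (fun T : ℝ => ∫ t in (0 : ℝ)..T, γ ^ t * R (xstar t) (ustar t))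
        Filter.atTop (nhds (V x₀)) := by
      have h := Filter.Tendsto.sub (tendsto_const_nhds (x := V x₀)) hVtend
      rw [sub_zero] at h
      apply h.congr'
      filter_upwards [Filter.eventually_ge_atTop (0 : ℝ)] with T hT
      exact (hfin T hT).symm
    exact tendsto_nhds_unique htend htend2
  refine ⟨⟨?_, ?_⟩, heq⟩
  · rintro r ⟨x, u, hu, hx, hx0, hint, rfl⟩
    exact hub x u hu hx hx0 hint
  · intro b hb
    have : V x₀ ∈ {r : ℝ | ∃ (x : ℝ → EuclideanSpace ℝ (Fin n)) (u : ℝ → EuclideanSpace ℝ (Fin m)),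
        (∀ t ≥ (0 : ℝ), u t ∈ U) ∧
        (∀ t ≥ (0 : ℝ), HasDerivAt x (f (x t) (u t)) t) ∧
        x 0 = x₀ ∧
        IntegrableOn (fun t : ℝ => γ ^ t * R (x t) (u t)) (Set.Ici 0) ∧
        r = ∫ τ in Set.Ici (0 : ℝ), γ ^ τ * R (x τ) (u τ)} :=
      ⟨xstar, ustar, hustar, hxstar, hxstar0, hintstar, heq.symm⟩
    exact hb this
end
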